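/- For the read-priority approximate system, the mean number of write requests p(n) is bounded below by ν·(1 + H_n) ≥ ν·ln(e(n+1)) for all n ≥ 1, where ν = ρ_w/(1−ρ_w); in particular p(n) → ∞ as n → ∞. -/

import Mathlib

open Filter Finset

/-- For the read-priority approximate system, the mean number of write requests
`p(n)` is bounded below by `ν(1+H_n) ≥ ν ln(e(n+1))`; in particular `p(n) → ∞`. -/
theorem stmt_11 (lw mw rr : ℝ)
    (hlw : 0 < lw) (hmw : 0 < mw) (hrw : lw / mw < 1) (hrr : 0 ≤ rr)
    (nu : ℝ) (hnu : nu = (lw / mw) / (1 - lw / mw))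
    (p : ℕ → ℝ)
    (hp : ∀ n : ℕ, p n
      = lw / (mw * (1 - rr / ((n : ℝ) + 1)) - lw)
        + ∑ i ∈ Finset.range n,
            lw / ((1 - rr / ((n : ℝ) + 1))
              * (((n : ℝ) - i) * mw - ((n : ℝ) - i - 1) * lw) - lw)) :
    (∀ n : ℕ, 1 ≤ n → lw / mw + rr / ((n : ℝ) + 1) < 1 →
      nu * Real.log (Real.exp 1 * ((n : ℝ) + 1))
        ≤ nu * (1 + ∑ i ∈ Finset.range n, (1 : ℝ) / (i + 1))
      ∧ nu * (1 + ∑ i ∈ Finset.range n, (1 : ℝ) / (i + 1)) ≤ p n)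
    ∧ ((∀ n : ℕ, lw / mw + rr / ((n : ℝ) + 1) < 1) →
        Filter.Tendsto p Filter.atTop Filter.atTop) := by
  have hlm : lw < mw := (div_lt_one hmw).mp hrw
  have hml : (0:ℝ) < mw - lw := by linarith
  have hnu' : nu = lw / (mw - lw) := by
    rw [hnu]
    have h1 : 1 - lw / mw = (mw - lw) / mw := by field_simp
    rw [h1, div_div_div_cancel_right₀]
    exact hmw.ne'
  have hnu0 : 0 < nu := by
    rw [hnu']; exact div_pos hlw hml
  -- harmonic sum lower bound
  have hlog : ∀ n : ℕ, Real.log ((n : ℝ) + 1) ≤ ∑ i ∈ Finset.range n, (1 : ℝ) / (i + 1) := by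
    intro n
    induction n with
    | zero => simp
    | succ n ih =>
        rw [Finset.sum_range_succ]
        have hx : (0:ℝ) < (n:ℝ) + 1 := by positivity
        have h1 : Real.log ((n : ℝ) + 1 + 1) - Real.log ((n : ℝ) + 1) ≤ 1 / ((n : ℝ) + 1) := by
          rw [← Real.log_div (by positivity) (by positivity)]
          have h2 := Real.log_le_sub_one_of_pos
            (x := ((n : ℝ) + 1 + 1) / ((n : ℝ) + 1)) (by positivity)
          have h3 : ((n : ℝ) + 1 + 1) / ((n : ℝ) + 1) - 1 = 1 / ((n : ℝ) + 1) := by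
            field_simp
            ring
          linarith
        push_cast
        linarith
  -- the key inequality
  have key : ∀ n : ℕ, 1 ≤ n → lw / mw + rr / ((n : ℝ) + 1) < 1 →
      nu * (1 + ∑ i ∈ Finset.range n, (1 : ℝ) / (i + 1)) ≤ p n := by
    intro n hn hc
    set c : ℝ := 1 - rr / ((n : ℝ) + 1) with hcdef
    have hc2 : lw / mw < c := by
      rw [hcdef]; linarith
    have hc1 : c ≤ 1 := by
      have : 0 ≤ rr / ((n : ℝ) + 1) := by positivity
      rw [hcdef]; linarith
    have hc0 : 0 < c := lt_of_le_of_lt (by positivity) hc2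
    have hcm : lw < mw * c := by
      have h := (div_lt_iff₀ hmw).mp hc2
      nlinarith
    -- first term
    have hfirst : nu ≤ lw / (mw * c - lw) := by
      rw [hnu']
      apply div_le_div_of_nonneg_left hlw.le (by linarith)
      nlinarith
    -- per-term bound
    have hterm : ∀ i ∈ Finset.range n,
        nu * (1 / ((n : ℝ) - i)) ≤
          lw / (c * (((n : ℝ) - i) * mw - ((n : ℝ) - i - 1) * lw) - lw) := by
      intro i hi
      have hi' : (i : ℝ) + 1 ≤ (n : ℝ) := by
        exact_mod_cast Finset.mem_range.mp hi
      set k : ℝ := (n : ℝ) - i with hk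
      have hk1 : 1 ≤ k := by rw [hk]; linarith
      have hDge : mw ≤ k * mw - (k - 1) * lw := by nlinarith
      have hden_pos : 0 < c * (k * mw - (k - 1) * lw) - lw := by nlinarith
      have hden_le : c * (k * mw - (k - 1) * lw) - lw ≤ k * (mw - lw) := by nlinarith
      have hmain : lw / (k * (mw - lw)) ≤
          lw / (c * (k * mw - (k - 1) * lw) - lw) :=
        div_le_div_of_nonneg_left hlw.le hden_pos hden_le
      have heq : nu * (1 / k) = lw / (k * (mw - lw)) := by
        rw [hnu', div_mul_div_comm, mul_one, mul_comm (mw - lw) k]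
      rw [heq]
      exact hmain
    -- sum of the lower-bound terms equals nu * H_n
    have hreflect : ∑ i ∈ Finset.range n, nu * (1 / ((n : ℝ) - i))
        = nu * ∑ j ∈ Finset.range n, (1 : ℝ) / (j + 1) := by
      rw [Finset.mul_sum]
      rw [← Finset.sum_range_reflect (fun j => nu * ((1 : ℝ) / (j + 1))) n]
      apply Finset.sum_congr rfl
      intro i hi
      have hi' : i < n := Finset.mem_range.mp hi
      have h1 : n - 1 - i + 1 = n - i := by omega
      have h2 : ((n - i : ℕ) : ℝ) = (n : ℝ) - i := by
        rw [Nat.cast_sub hi'.le]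
      have h4 : ((n - 1 - i + 1 : ℕ) : ℝ) = ((n - 1 - i : ℕ) : ℝ) + 1 := by
        push_cast; ring
      show nu * (1 / ((n : ℝ) - i)) = nu * (1 / (((n - 1 - i : ℕ) : ℝ) + 1))
      rw [← h4, h1, h2]
    have hsum : nu * ∑ j ∈ Finset.range n, (1 : ℝ) / (j + 1)
        ≤ ∑ i ∈ Finset.range n,
            lw / (c * (((n : ℝ) - i) * mw - ((n : ℝ) - i - 1) * lw) - lw) := by
      rw [← hreflect]
      exact Finset.sum_le_sum hterm
    rw [hp n]
    have : nu * (1 + ∑ i ∈ Finset.range n, (1 : ℝ) / (i + 1))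
        = nu + nu * ∑ i ∈ Finset.range n, (1 : ℝ) / (i + 1) := by ring
    rw [this]
    exact add_le_add hfirst hsum
  constructor
  · intro n hn hc
    refine ⟨?_, key n hn hc⟩
    have hlogeq : Real.log (Real.exp 1 * ((n : ℝ) + 1))
        = 1 + Real.log ((n : ℝ) + 1) := by
      rw [Real.log_mul (by positivity) (by positivity), Real.log_exp]
    rw [hlogeq]
    apply mul_le_mul_of_nonneg_left _ hnu0.le
    linarith [hlog n]
  · intro hall
    have hmono : ∀ᶠ n in atTop,
        nu * (1 + ∑ i ∈ Finset.range n, (1 : ℝ) / (i + 1)) ≤ p n :=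
      eventually_atTop.mpr ⟨1, fun n hn => key n hn (hall n)⟩
    have hA : Tendsto (fun n : ℕ => nu * (1 + ∑ i ∈ Finset.range n, (1 : ℝ) / (i + 1)))
        atTop atTop := by
      apply Tendsto.const_mul_atTop hnu0
      exact tendsto_atTop_add_const_left _ 1 Real.tendsto_sum_range_one_div_nat_succ_atTop
    exact tendsto_atTop_mono' _ hmono hA
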